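/- arXiv:1709.00748 — 3 statements merged into one kernel-verified Lean document; each statement's English description precedes it below -/
import Mathlib

section
/- Let n ≥ 2 and let λ be a real number with 0 < λ ≤ (n−1)/2. There is a constant C_λ, depending only on n and λ, such that for every sphere S_ρ ⊂ ℝⁿ of radius ρ > 0 (with arbitrary center) and every x ∈ ℝⁿ one has ∫_{S_ρ} |x − y|^{−(n−1−2λ)} dσ_ρ(y) ≤ C_λ ρ^{2λ}, where σ_ρ denotes the surface measure ((n−1)-dimensional Hausdorff measure) on S_ρ. -/
open MeasureTheory
open scoped ENNReal

noncomputable section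

abbrev Euc (n : ℕ) := EuclideanSpace ℝ (Fin n)

open Metric Set Module Pointwise
open scoped NNReal RealInnerProductSpace

-- Aux 1: Hausdorff measure of a Euclidean closed ball, upper bound
lemma aux_ball (m : ℕ) :
    ∃ K : ℝ≥0∞, K ≠ ∞ ∧ ∀ s : ℝ, 0 ≤ s →
      μH[(m : ℝ)] (closedBall (0 : Euc m) s) ≤ K * ENNReal.ofReal (s ^ m) := by
  set c : ℝ≥0 := (Fintype.card (Fin m) : ℝ≥0) ^ ((1:ℝ≥0∞)/2).toReal with hc
  refine ⟨(c : ℝ≥0∞) ^ (m : ℝ) * ENNReal.ofReal (2 ^ m), ?_, ?_⟩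
  · exact ENNReal.mul_ne_top (by rw [ENNReal.rpow_natCast]; exact ENNReal.pow_ne_top ENNReal.coe_ne_top) ENNReal.ofReal_ne_top
  intro s hs
  have hK := PiLp.antilipschitzWith_ofLp 2 (fun _ : Fin m => ℝ)
  have hlip : LipschitzWith c (WithLp.equiv 2 (∀ _ : Fin m, ℝ)).symm :=
    hK.to_rightInverse (WithLp.equiv 2 _).right_inv
  have hsub : closedBall (0 : Euc m) s
      ⊆ (WithLp.equiv 2 (∀ _ : Fin m, ℝ)).symm '' (closedBall (0 : ∀ _ : Fin m, ℝ) s) := by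
    intro x hx
    refine ⟨WithLp.equiv 2 _ x, ?_, (WithLp.equiv 2 _).symm_apply_apply x⟩
    have h1 : dist (WithLp.equiv 2 (∀ _ : Fin m, ℝ) x) (WithLp.equiv 2 _ (0 : Euc m)) ≤ dist x 0 := by
      simpa using (PiLp.lipschitzWith_ofLp 2 (fun _ : Fin m => ℝ)).dist_le_mul x 0
    simp only [mem_closedBall] at hx ⊢
    simpa using h1.trans hx
  have hpi : μH[(m : ℝ)] (closedBall (0 : ∀ _ : Fin m, ℝ) s) = ENNReal.ofReal ((2*s) ^ m) := by
    rw [show ((m : ℝ)) = ((Fintype.card (Fin m) : ℝ)) by simp,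
      MeasureTheory.hausdorffMeasure_pi_real]
    simpa using Real.volume_pi_closedBall (0 : Fin m → ℝ) hs
  have h2 := hlip.hausdorffMeasure_image_le (d := (m : ℝ)) (by positivity)
    (closedBall (0 : ∀ _ : Fin m, ℝ) s)
  calc μH[(m : ℝ)] (closedBall (0 : Euc m) s)
      ≤ μH[(m : ℝ)] ((WithLp.equiv 2 (∀ _ : Fin m, ℝ)).symm '' (closedBall (0 : ∀ _ : Fin m, ℝ) s)) :=
        measure_mono hsub
    _ ≤ (c : ℝ≥0∞) ^ (m : ℝ) * μH[(m : ℝ)] (closedBall (0 : ∀ _ : Fin m, ℝ) s) := h2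
    _ = (c : ℝ≥0∞) ^ (m : ℝ) * ENNReal.ofReal ((2*s) ^ m) := by rw [hpi]
    _ = (c : ℝ≥0∞) ^ (m : ℝ) * ENNReal.ofReal (2 ^ m) * ENNReal.ofReal (s ^ m) := by
        rw [mul_pow, ENNReal.ofReal_mul (by positivity), mul_assoc]

lemma sqrt_aux {a b : ℝ} (ha : 0 ≤ a) (hab : a ≤ b) (hb : b ≤ 1/2) :
    Real.sqrt (1 - a^2) - Real.sqrt (1 - b^2) ≤ b - a := by
  have hb0 : 0 ≤ b := le_trans ha hab
  have hB2 : Real.sqrt (1-b^2) ^ 2 = 1 - b^2 := Real.sq_sqrt (by nlinarith)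
  have hB0 : (1:ℝ)/2 ≤ Real.sqrt (1-b^2) := by
    have h : ((1:ℝ)/2)^2 ≤ 1 - b^2 := by nlinarith
    calc (1:ℝ)/2 = Real.sqrt (((1:ℝ)/2)^2) := by rw [Real.sqrt_sq]; norm_num
    _ ≤ _ := Real.sqrt_le_sqrt h
  have hrhs : 0 ≤ Real.sqrt (1-b^2) + (b-a) := by
    nlinarith [Real.sqrt_nonneg (1-b^2)]
  have hsq : (1 - a^2) ≤ (Real.sqrt (1-b^2) + (b-a))^2 := by
    nlinarith [Real.sqrt_nonneg (1-b^2)]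
  have : Real.sqrt (1-a^2) ≤ Real.sqrt (1-b^2) + (b-a) := by
    calc Real.sqrt (1-a^2) ≤ Real.sqrt ((Real.sqrt (1-b^2) + (b-a))^2) := Real.sqrt_le_sqrt hsq
    _ = _ := Real.sqrt_sq hrhs
  linarith

/-- abs version -/
lemma sqrt_aux' {a b : ℝ} (ha : 0 ≤ a) (hb : 0 ≤ b) (ha' : a ≤ 1/2) (hb' : b ≤ 1/2) :
    |Real.sqrt (1 - a^2) - Real.sqrt (1 - b^2)| ≤ |a - b| := by
  rcases le_total a b with h | h
  · have hm : Real.sqrt (1-b^2) ≤ Real.sqrt (1-a^2) := Real.sqrt_le_sqrt (by nlinarith)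
    rw [abs_of_nonneg (by linarith), abs_of_nonpos (by linarith)]
    linarith [sqrt_aux ha h hb']
  · have hm : Real.sqrt (1-a^2) ≤ Real.sqrt (1-b^2) := Real.sqrt_le_sqrt (by nlinarith)
    rw [abs_of_nonpos (by linarith), abs_of_nonneg (by linarith)]
    linarith [sqrt_aux hb h ha']

lemma aux_cap (n : ℕ) (hn : 2 ≤ n) :
    ∃ K : ℝ≥0∞, K ≠ ∞ ∧ ∀ p : Euc n, ‖p‖ = 1 → ∀ s : ℝ, 0 ≤ s → s ≤ 1/2 →
      μH[(n:ℝ)-1] (sphere (0:Euc n) 1 ∩ closedBall p s)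
        ≤ K * ENNReal.ofReal (s ^ (n-1)) := by
  obtain ⟨K₀, hK₀, hball⟩ := aux_ball (n-1)
  have hd0 : (0:ℝ) ≤ (n:ℝ) - 1 := by
    have : (2:ℝ) ≤ (n:ℝ) := by exact_mod_cast hn
    linarith
  have hcast : ((n-1 : ℕ) : ℝ) = (n:ℝ) - 1 := by
    have := Nat.cast_sub (by omega : 1 ≤ n) (R := ℝ); simpa using this
  refine ⟨((2:ℝ≥0) : ℝ≥0∞) ^ ((n:ℝ)-1) * K₀,
    ENNReal.mul_ne_top (ENNReal.rpow_ne_top_of_nonneg hd0 (by simp)) hK₀, ?_⟩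
  intro p hp s hs0 hs
  haveI : Fact (Module.finrank ℝ (Euc n) = (n-1) + 1) :=
    ⟨by rw [finrank_euclideanSpace_fin]; omega⟩
  have hp0 : p ≠ 0 := by intro h; rw [h] at hp; simp at hp
  set P := (ℝ ∙ p)ᗮ with hP
  set b := OrthonormalBasis.fromOrthogonalSpanSingleton (𝕜 := ℝ) (n-1) hp0 with hb
  set J : Euc (n-1) →ₗᵢ[ℝ] Euc n := P.subtypeₗᵢ.comp b.repr.symm.toLinearIsometry with hJ
  set G : Euc (n-1) → Euc n := fun u => J u + Real.sqrt (1 - ‖u‖^2) • p with hG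
  -- Claim A : the cap is contained in the image of the ball under G
  have hA : sphere (0:Euc n) 1 ∩ closedBall p s ⊆ G '' closedBall 0 s := by
    rintro w ⟨hw1, hw2⟩
    have hw1' : ‖w‖ = 1 := mem_sphere_zero_iff_norm.1 hw1
    have hw2' : ‖w - p‖ ≤ s := by rwa [mem_closedBall, dist_eq_norm] at hw2
    set c : ℝ := ⟪w, p⟫ with hcdef
    have hwp2 : ‖w - p‖^2 = 2 - 2*c := by
      rw [norm_sub_sq_real, hw1', hp]; ring
    have hwps : ‖w - p‖^2 ≤ s^2 := by
      nlinarith [norm_nonneg (w - p)]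
    have hc1 : c ≤ 1 := by
      have := real_inner_le_norm w p; rw [hw1', hp] at this; linarith
    have hc78 : 7/8 ≤ c := by nlinarith
    set v := w - c • p with hv
    have hvP : v ∈ P := by
      rw [hP, Submodule.mem_orthogonal_singleton_iff_inner_right]
      rw [hv, inner_sub_right, real_inner_smul_right, real_inner_self_eq_norm_sq, hp,
        real_inner_comm]
      ring
    have hv2 : ‖v‖^2 = 1 - c^2 := by
      rw [hv, norm_sub_sq_real, real_inner_smul_right, norm_smul, hw1', hp,
        Real.norm_eq_abs]
      rw [← hcdef]
      rw [mul_pow, sq_abs]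
      ring
    have hvs : ‖v‖ ≤ s := by
      have h1 : ‖v‖^2 ≤ s^2 := by nlinarith
      rw [← Real.sqrt_sq (norm_nonneg v), ← Real.sqrt_sq hs0]
      exact Real.sqrt_le_sqrt h1
    set u := b.repr ⟨v, hvP⟩ with hu
    have hnu : ‖u‖ = ‖v‖ := by
      rw [hu, LinearIsometryEquiv.norm_map]
      rfl
    refine ⟨u, ?_, ?_⟩
    · rw [mem_closedBall_zero_iff, hnu]; exact hvs
    · have hJu : J u = v := by
        rw [hJ, hu]
        simp only [LinearIsometry.coe_comp, Function.comp_apply,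
          LinearIsometryEquiv.coe_toLinearIsometry, LinearIsometryEquiv.symm_apply_apply]
        rfl
      show J u + Real.sqrt (1 - ‖u‖^2) • p = w
      rw [hJu, hnu, hv2]
      have : Real.sqrt (1 - (1 - c^2)) = c := by
        rw [show 1 - (1 - c^2) = c^2 by ring, Real.sqrt_sq (by linarith)]
      rw [this, hv]
      abel
  -- Claim B : G is 2-Lipschitz on the ball
  have hB : LipschitzOnWith 2 G (closedBall 0 s) := by
    have h := LipschitzOnWith.of_dist_le' (K := 2) (f := G) (s := closedBall (0 : Euc (n-1)) s) ?_
    · simpa using h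
    intro u hu v hv
    have hu' : ‖u‖ ≤ 1/2 := (mem_closedBall_zero_iff.1 hu).trans hs
    have hv' : ‖v‖ ≤ 1/2 := (mem_closedBall_zero_iff.1 hv).trans hs
    have h1 : dist (G u) (G v)
        ≤ ‖J u - J v‖ + |Real.sqrt (1-‖u‖^2) - Real.sqrt (1-‖v‖^2)| := by
      rw [dist_eq_norm, hG]
      have : (J u + Real.sqrt (1 - ‖u‖^2) • p) - (J v + Real.sqrt (1 - ‖v‖^2) • p)
          = (J u - J v) + (Real.sqrt (1-‖u‖^2) - Real.sqrt (1-‖v‖^2)) • p := by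
        rw [sub_smul]; abel
      rw [this]
      refine (norm_add_le _ _).trans ?_
      rw [norm_smul, Real.norm_eq_abs, hp, mul_one]
    have h2 : ‖J u - J v‖ = dist u v := by
      rw [← dist_eq_norm, J.isometry.dist_eq]
    have h3 : |Real.sqrt (1-‖u‖^2) - Real.sqrt (1-‖v‖^2)| ≤ dist u v := by
      refine (sqrt_aux' (norm_nonneg u) (norm_nonneg v) hu' hv').trans ?_
      rw [dist_eq_norm]
      exact abs_norm_sub_norm_le u v
    linarith
  -- put it together
  calc μH[(n:ℝ)-1] (sphere (0:Euc n) 1 ∩ closedBall p s)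
      ≤ μH[(n:ℝ)-1] (G '' closedBall 0 s) := measure_mono hA
    _ ≤ ((2:ℝ≥0) : ℝ≥0∞) ^ ((n:ℝ)-1) * μH[(n:ℝ)-1] (closedBall (0 : Euc (n-1)) s) :=
        hB.hausdorffMeasure_image_le hd0
    _ ≤ ((2:ℝ≥0) : ℝ≥0∞) ^ ((n:ℝ)-1) * (K₀ * ENNReal.ofReal (s ^ (n-1))) := by
        gcongr
        rw [← hcast]
        exact hball s hs0
    _ = _ := by rw [mul_assoc]

lemma aux_capgen (n : ℕ) (hn : 2 ≤ n) :
    ∃ K : ℝ≥0∞, K ≠ ∞ ∧ μH[(n:ℝ)-1] (sphere (0:Euc n) 1) ≤ K ∧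
      ∀ (x : Euc n) (r : ℝ), 0 < r → r ≤ 1 →
        μH[(n:ℝ)-1] (sphere (0:Euc n) 1 ∩ closedBall x r)
          ≤ K * ENNReal.ofReal (r ^ (n-1)) := by
  obtain ⟨K₁, hK₁, hcap⟩ := aux_cap n hn
  set S := sphere (0:Euc n) 1 with hS
  -- bounded caps: any closed ball of radius ≤ 1/2 intersected with S
  have hcap2 : ∀ (x : Euc n) (r : ℝ), 0 ≤ r → r ≤ 1/4 →
      μH[(n:ℝ)-1] (S ∩ closedBall x r) ≤ K₁ * ENNReal.ofReal ((2*r) ^ (n-1)) := by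
    intro x r hr0 hr
    rcases Set.eq_empty_or_nonempty (S ∩ closedBall x r) with he | ⟨q, hq1, hq2⟩
    · rw [he]; simp
    have hq1' : ‖q‖ = 1 := mem_sphere_zero_iff_norm.1 hq1
    have hsub : S ∩ closedBall x r ⊆ S ∩ closedBall q (2*r) := by
      rintro w ⟨hw1, hw2⟩
      refine ⟨hw1, ?_⟩
      rw [mem_closedBall] at *
      calc dist w q ≤ dist w x + dist x q := dist_triangle _ _ _
        _ ≤ r + r := by
            refine add_le_add hw2 ?_
            rw [dist_comm]; exact hq2
        _ = 2*r := by ring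
    exact (measure_mono hsub).trans (hcap q hq1' (2*r) (by linarith) (by linarith))
  -- total measure of the sphere is finite
  obtain ⟨t, ht⟩ := (isCompact_sphere (0:Euc n) 1).elim_finite_subcover
    (fun p : Euc n => ball p (1/4)) (fun p => isOpen_ball)
    (fun x hx => Set.mem_iUnion.2 ⟨x, mem_ball_self (by norm_num)⟩)
  set M : ℝ≥0∞ := (t.card : ℝ≥0∞) * (K₁ * ENNReal.ofReal ((1/2:ℝ) ^ (n-1))) with hM
  have hMne : M ≠ ∞ := by
    refine ENNReal.mul_ne_top (by simp) (ENNReal.mul_ne_top hK₁ ENNReal.ofReal_ne_top)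
  have hStot : μH[(n:ℝ)-1] S ≤ M := by
    have h1 : S ⊆ ⋃ p ∈ t, S ∩ closedBall p (1/4) := by
      intro x hx
      obtain ⟨p, hp1, hp2⟩ := Set.mem_iUnion₂.1 (ht hx)
      exact Set.mem_iUnion₂.2 ⟨p, hp1, hx, ball_subset_closedBall hp2⟩
    calc μH[(n:ℝ)-1] S ≤ ∑ p ∈ t, μH[(n:ℝ)-1] (S ∩ closedBall p (1/4)) :=
          (measure_mono h1).trans (measure_biUnion_finset_le _ _)
      _ ≤ ∑ _p ∈ t, K₁ * ENNReal.ofReal ((1/2:ℝ) ^ (n-1)) := by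
          refine Finset.sum_le_sum fun p _ => ?_
          have := hcap2 p (1/4) (by norm_num) le_rfl
          norm_num at this ⊢
          exact this
      _ = M := by rw [hM, Finset.sum_const, nsmul_eq_mul]
  refine ⟨M + K₁ * ENNReal.ofReal ((2:ℝ) ^ (n-1)) + M * ENNReal.ofReal ((4:ℝ) ^ (n-1)),
    by refine ENNReal.add_ne_top.2 ⟨ENNReal.add_ne_top.2 ⟨hMne, ENNReal.mul_ne_top hK₁ ENNReal.ofReal_ne_top⟩, ENNReal.mul_ne_top hMne ENNReal.ofReal_ne_top⟩,
    le_add_of_le_of_nonneg (le_add_of_le_of_nonneg hStot (zero_le ..)) (zero_le ..), ?_⟩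
  intro x r hr0 hr1
  rcases le_or_gt r (1/4) with hr | hr
  · -- small radius: use hcap2
    have h := hcap2 x r hr0.le hr
    have h2 : K₁ * ENNReal.ofReal ((2*r) ^ (n-1))
        ≤ K₁ * ENNReal.ofReal ((2:ℝ) ^ (n-1)) * ENNReal.ofReal (r ^ (n-1)) := by
      rw [mul_pow, ENNReal.ofReal_mul (by positivity), ← mul_assoc]
    refine h.trans (h2.trans ?_)
    rw [add_mul, add_mul]
    exact le_add_of_le_of_nonneg (le_add_of_nonneg_left (zero_le ..)) (zero_le ..)
  · -- large radius: use total bound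
    have h1 : (1:ℝ≥0∞) ≤ ENNReal.ofReal ((4:ℝ) ^ (n-1)) * ENNReal.ofReal (r ^ (n-1)) := by
      rw [← ENNReal.ofReal_mul (by positivity), ← mul_pow]
      exact ENNReal.one_le_ofReal.2 (one_le_pow₀ (by linarith))
    calc μH[(n:ℝ)-1] (S ∩ closedBall x r) ≤ μH[(n:ℝ)-1] S := measure_mono Set.inter_subset_left
      _ ≤ M := hStot
      _ = M * 1 := (mul_one M).symm
      _ ≤ M * (ENNReal.ofReal ((4:ℝ) ^ (n-1)) * ENNReal.ofReal (r ^ (n-1))) := by gcongr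
      _ = M * ENNReal.ofReal ((4:ℝ) ^ (n-1)) * ENNReal.ofReal (r ^ (n-1)) := by
          rw [hM]; ring
      _ ≤ _ := by
          rw [add_mul]
          exact le_add_of_nonneg_left (zero_le ..)

lemma aux_int (n : ℕ) (hn : 2 ≤ n) (α : ℝ) (hα0 : 0 ≤ α) (hαlt : α < (n:ℝ)-1) :
    ∃ B : ℝ≥0∞, B ≠ ∞ ∧ ∀ x : Euc n,
      (∫⁻ w in sphere (0:Euc n) 1, ENNReal.ofReal (‖x - w‖ ^ (-α)) ∂μH[(n:ℝ)-1]) ≤ B := by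
  obtain ⟨K, hK, hStot, hcap⟩ := aux_capgen n hn
  have hcast : ((n-1 : ℕ) : ℝ) = (n:ℝ) - 1 := by
    have := Nat.cast_sub (by omega : 1 ≤ n) (R := ℝ); simpa using this
  set r0 : ℝ := (2:ℝ) ^ (α - ((n:ℝ)-1)) with hr0
  have hr0pos : 0 < r0 := Real.rpow_pos_of_pos two_pos _
  have hr0lt : r0 < 1 := Real.rpow_lt_one_of_one_lt_of_neg one_lt_two (by linarith)
  have hr0lt' : ENNReal.ofReal r0 < 1 := by
    rw [← ENNReal.ofReal_one]
    exact (ENNReal.ofReal_lt_ofReal_iff (by norm_num)).2 hr0lt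
  set B : ℝ≥0∞ := K + K * ENNReal.ofReal ((2:ℝ) ^ α) * (1 - ENNReal.ofReal r0)⁻¹ with hB
  have hBne : B ≠ ∞ := by
    refine ENNReal.add_ne_top.2 ⟨hK, ENNReal.mul_ne_top (ENNReal.mul_ne_top hK ENNReal.ofReal_ne_top) ?_⟩
    rw [ENNReal.inv_ne_top]
    exact (tsub_pos_iff_lt.2 hr0lt').ne'
  refine ⟨B, hBne, ?_⟩
  intro x
  set S := sphere (0:Euc n) 1 with hS
  -- pointwise domination
  have hpt : ∀ w : Euc n, ENNReal.ofReal (‖x - w‖ ^ (-α))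
      ≤ 1 + ∑' k : ℕ, (closedBall x ((2:ℝ)^(-(k:ℝ)))).indicator
          (fun _ => ENNReal.ofReal ((2:ℝ) ^ (((k:ℝ)+1)*α))) w := by
    intro w
    set t : ℝ := ‖x - w‖ with htdef
    have ht0 : 0 ≤ t := norm_nonneg _
    rcases eq_or_lt_of_le ht0 with h0 | h0
    · -- t = 0
      have : t ^ (-α) ≤ 1 := by
        rw [← h0]
        rcases eq_or_lt_of_le hα0 with hα | hα
        · rw [← hα, neg_zero, Real.rpow_zero]
        · rw [Real.zero_rpow (by linarith)]; norm_num
      refine le_trans (ENNReal.ofReal_le_ofReal this) ?_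
      simp only [ENNReal.ofReal_one]
      exact le_add_of_le_of_nonneg le_rfl (zero_le ..)
    rcases le_or_gt 1 t with h1 | h1
    · -- t ≥ 1
      have : t ^ (-α) ≤ 1 := Real.rpow_le_one_of_one_le_of_nonpos h1 (by linarith)
      refine le_trans (ENNReal.ofReal_le_ofReal this) ?_
      simp only [ENNReal.ofReal_one]
      exact le_add_of_le_of_nonneg le_rfl (zero_le ..)
    · -- 0 < t < 1
      set k : ℕ := ⌊Real.logb 2 t⁻¹⌋₊ with hk
      have htinv : 1 ≤ t⁻¹ := (one_le_inv₀ h0).2 h1.le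
      have hl0 : 0 ≤ Real.logb 2 t⁻¹ := Real.logb_nonneg one_lt_two htinv
      have hk1 : (k:ℝ) ≤ Real.logb 2 t⁻¹ := Nat.floor_le hl0
      have hk2 : Real.logb 2 t⁻¹ < (k:ℝ)+1 := Nat.lt_floor_add_one _
      have hlogb : (2:ℝ) ^ (Real.logb 2 t⁻¹) = t⁻¹ :=
        Real.rpow_logb two_pos (by norm_num) (by positivity)
      have hmem : w ∈ closedBall x ((2:ℝ)^(-(k:ℝ))) := by
        rw [mem_closedBall, dist_comm, dist_eq_norm]
        rw [← htdef]
        have h2 : (2:ℝ)^(k:ℝ) ≤ t⁻¹ := by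
          rw [← hlogb]
          exact Real.rpow_le_rpow_of_exponent_le one_le_two hk1
        rw [Real.rpow_neg (by norm_num)]
        rw [← inv_inv t]
        exact inv_anti₀ (by positivity) h2
      have hbound : t ^ (-α) ≤ (2:ℝ) ^ (((k:ℝ)+1)*α) := by
        have h3 : t⁻¹ < (2:ℝ)^((k:ℝ)+1) := by
          rw [← hlogb]
          exact Real.rpow_lt_rpow_of_exponent_lt one_lt_two hk2
        have h4 : (2:ℝ)^(-((k:ℝ)+1)) < t := by
          rw [Real.rpow_neg (by norm_num), ← inv_inv t]
          exact inv_strictAnti₀ (by positivity) h3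
        calc t ^ (-α) ≤ ((2:ℝ)^(-((k:ℝ)+1))) ^ (-α) :=
              Real.rpow_le_rpow_of_nonpos (by positivity) h4.le (by linarith)
          _ = (2:ℝ) ^ (((k:ℝ)+1)*α) := by
              rw [← Real.rpow_mul (by norm_num)]
              ring_nf
      refine le_trans (ENNReal.ofReal_le_ofReal hbound) ?_
      refine le_trans ?_ (le_add_of_nonneg_left (zero_le ..))
      refine le_trans ?_ (ENNReal.le_tsum k)
      rw [Set.indicator_of_mem hmem]
  -- integrate
  have hμ : ∀ k : ℕ, μH[(n:ℝ)-1] (closedBall x ((2:ℝ)^(-(k:ℝ))) ∩ S)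
      ≤ K * ENNReal.ofReal (((2:ℝ)^(-(k:ℝ))) ^ (n-1)) := by
    intro k
    rw [Set.inter_comm]
    exact hcap x _ (Real.rpow_pos_of_pos two_pos _)
      (Real.rpow_le_one_of_one_le_of_nonpos one_le_two (neg_nonpos.2 (Nat.cast_nonneg k)))
  calc (∫⁻ w in S, ENNReal.ofReal (‖x - w‖ ^ (-α)) ∂μH[(n:ℝ)-1])
      ≤ ∫⁻ w in S, (1 + ∑' k : ℕ, (closedBall x ((2:ℝ)^(-(k:ℝ)))).indicator
          (fun _ => ENNReal.ofReal ((2:ℝ) ^ (((k:ℝ)+1)*α))) w) ∂μH[(n:ℝ)-1] :=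
        lintegral_mono hpt
    _ = μH[(n:ℝ)-1] S + ∑' k : ℕ, ENNReal.ofReal ((2:ℝ) ^ (((k:ℝ)+1)*α)) *
          μH[(n:ℝ)-1] (closedBall x ((2:ℝ)^(-(k:ℝ))) ∩ S) := by
        rw [lintegral_add_left measurable_const, setLIntegral_one,
          lintegral_tsum (fun k => ((measurable_const.indicator measurableSet_closedBall).aemeasurable))]
        congr 1
        refine tsum_congr fun k => ?_
        rw [lintegral_indicator measurableSet_closedBall, setLIntegral_const,
          Measure.restrict_apply measurableSet_closedBall]
    _ ≤ K + ∑' k : ℕ, ENNReal.ofReal ((2:ℝ) ^ (((k:ℝ)+1)*α)) *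
          (K * ENNReal.ofReal (((2:ℝ)^(-(k:ℝ))) ^ (n-1))) := by
        gcongr <;> first | exact hStot | exact hμ _
    _ = K + K * ENNReal.ofReal ((2:ℝ) ^ α) * ∑' k : ℕ, (ENNReal.ofReal r0) ^ k := by
        congr 1
        rw [← ENNReal.tsum_mul_left]
        refine tsum_congr fun k => ?_
        have hre : (2:ℝ) ^ (((k:ℝ)+1)*α) * ((2:ℝ)^(-(k:ℝ))) ^ (n-1)
            = (2:ℝ) ^ α * r0 ^ k := by
          rw [← Real.rpow_natCast ((2:ℝ)^(-(k:ℝ))) (n-1), ← Real.rpow_natCast r0 k,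
            ← Real.rpow_mul (by norm_num), hr0, ← Real.rpow_mul (by norm_num),
            ← Real.rpow_add two_pos, ← Real.rpow_add two_pos]
          rw [hcast]
          ring_nf
        calc ENNReal.ofReal ((2:ℝ) ^ (((k:ℝ)+1)*α)) * (K * ENNReal.ofReal (((2:ℝ)^(-(k:ℝ))) ^ (n-1)))
            = K * ENNReal.ofReal ((2:ℝ) ^ (((k:ℝ)+1)*α) * ((2:ℝ)^(-(k:ℝ))) ^ (n-1)) := by
              rw [ENNReal.ofReal_mul (by positivity)]; ring
          _ = K * ENNReal.ofReal ((2:ℝ)^α * r0 ^ k) := by rw [hre]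
          _ = K * ENNReal.ofReal ((2:ℝ)^α) * ENNReal.ofReal (r0 ^ k) := by
              rw [ENNReal.ofReal_mul (by positivity)]; ring
          _ = K * ENNReal.ofReal ((2:ℝ)^α) * (ENNReal.ofReal r0) ^ k := by
              rw [ENNReal.ofReal_pow hr0pos.le]
    _ = B := by
        rw [hB, ENNReal.tsum_geometric]


/-- For `n ≥ 2` and `0 < λ ≤ (n-1)/2` there is a constant `C`, depending only
on `n` and `λ`, such that for every sphere of radius `ρ > 0` in `ℝⁿ` (arbitrary center `z`)
and every `x ∈ ℝⁿ`,
`∫_{S_ρ} |x - y|^{-(n-1-2λ)} dσ_ρ(y) ≤ C ρ^{2λ}`,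
where `σ_ρ` is the `(n-1)`-dimensional Hausdorff measure on the sphere. -/
theorem stmt0 (n : ℕ) (hn : 2 ≤ n) (lam : ℝ) (hlam0 : 0 < lam)
    (hlam1 : lam ≤ ((n : ℝ) - 1) / 2) :
    ∃ C : ℝ, 0 < C ∧ ∀ (z : Euc n) (ρ : ℝ), 0 < ρ → ∀ x : Euc n,
      (∫⁻ y in Metric.sphere z ρ,
          ENNReal.ofReal (‖x - y‖ ^ (-((n : ℝ) - 1 - 2 * lam)))
          ∂(MeasureTheory.Measure.hausdorffMeasure ((n : ℝ) - 1)))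
        ≤ ENNReal.ofReal (C * ρ ^ (2 * lam)) := by
  set α : ℝ := (n:ℝ) - 1 - 2 * lam with hα
  set d : ℝ := (n:ℝ) - 1 with hd
  have hd0 : 0 ≤ d := by
    have : (2:ℝ) ≤ (n:ℝ) := by exact_mod_cast hn
    rw [hd]; linarith
  have hα0 : 0 ≤ α := by rw [hα]; linarith
  have hαlt : α < (n:ℝ) - 1 := by rw [hα]; linarith
  obtain ⟨B, hBne, hint⟩ := aux_int n hn α hα0 hαlt
  refine ⟨B.toReal + 1, by positivity, ?_⟩
  intro z ρ hρ x
  have hρ' : ρ ≠ 0 := hρ.ne'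
  set T : Euc n → Euc n := fun w => z + ρ • w with hT
  have hTmeas : Measurable T := (measurable_id.const_smul ρ).const_add z
  have hf : Measurable (fun y : Euc n => ENNReal.ofReal (‖x - y‖ ^ (-α))) := by
    fun_prop
  set c : ℝ≥0 := ‖ρ⁻¹‖₊ ^ d with hc
  have hρinv0 : ρ⁻¹ ≠ 0 := inv_ne_zero hρ'
  have hcE : (c : ℝ≥0∞) = (ENNReal.ofReal ρ) ^ (-d) := by
    rw [hc, ENNReal.coe_rpow_of_ne_zero (nnnorm_ne_zero_iff.2 hρinv0),
      ← enorm_eq_nnnorm, Real.enorm_eq_ofReal (inv_pos.2 hρ).le, ENNReal.ofReal_inv_of_pos hρ,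
      ← ENNReal.rpow_neg_one, ← ENNReal.rpow_mul]
    norm_num
  have hoρ0 : ENNReal.ofReal ρ ≠ 0 := (ENNReal.ofReal_pos.2 hρ).ne'
  have hoρtop : ENNReal.ofReal ρ ≠ ∞ := ENNReal.ofReal_ne_top
  have hcne0 : (c : ℝ≥0∞) ≠ 0 := by
    rw [hcE]
    exact (ENNReal.rpow_pos (ENNReal.ofReal_pos.2 hρ) hoρtop).ne'
  have hcnetop : (c : ℝ≥0∞) ≠ ∞ := ENNReal.coe_ne_top
  -- the pushforward of Hausdorff measure under T
  have hmap : Measure.map T μH[d] = (c : ℝ≥0∞) • μH[d] := by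
    ext A hA
    rw [Measure.map_apply hTmeas hA, Measure.smul_apply, smul_eq_mul]
    have hpre : T ⁻¹' A = ρ⁻¹ • ((-z) +ᵥ A) := by
      ext w
      rw [Set.mem_preimage, Set.mem_smul_set_iff_inv_smul_mem₀ hρinv0, inv_inv,
        Set.mem_vadd_set_iff_neg_vadd_mem, neg_neg]
      rfl
    rw [hpre, Measure.hausdorffMeasure_smul₀ hd0 hρinv0,
      MeasureTheory.hausdorffMeasure_vadd (-z) (Or.inl hd0), ← hc, ENNReal.smul_def,
      smul_eq_mul]
  -- preimage of the sphere
  have hsph : T ⁻¹' (Metric.sphere z ρ) = Metric.sphere (0 : Euc n) 1 := by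
    ext w
    rw [Set.mem_preimage, mem_sphere_iff_norm, mem_sphere_iff_norm, hT]
    simp only [add_sub_cancel_left, sub_zero, norm_smul, Real.norm_eq_abs, abs_of_pos hρ]
    constructor
    · intro h; exact mul_left_cancel₀ hρ' (by rw [h, mul_one])
    · intro h; rw [h, mul_one]
  -- change of variables
  have key : (c : ℝ≥0∞) * ∫⁻ y in Metric.sphere z ρ, ENNReal.ofReal (‖x - y‖ ^ (-α)) ∂μH[d]
      = ∫⁻ w in Metric.sphere (0:Euc n) 1, ENNReal.ofReal (‖x - T w‖ ^ (-α)) ∂μH[d] := by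
    rw [← smul_eq_mul, ← lintegral_smul_measure, ← Measure.restrict_smul, ← hmap,
      Measure.restrict_map hTmeas isClosed_sphere.measurableSet, lintegral_map hf hTmeas, hsph]
  set x' : Euc n := ρ⁻¹ • (x - z) with hx'
  have hnormeq : ∀ w : Euc n, ‖x - T w‖ = ρ * ‖x' - w‖ := by
    intro w
    rw [hT, hx']
    have : x - (z + ρ • w) = ρ • (ρ⁻¹ • (x - z) - w) := by
      rw [smul_sub, smul_inv_smul₀ hρ']
      abel
    rw [this, norm_smul, Real.norm_eq_abs, abs_of_pos hρ]
  have hTint : (∫⁻ w in Metric.sphere (0:Euc n) 1, ENNReal.ofReal (‖x - T w‖ ^ (-α)) ∂μH[d])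
      = ENNReal.ofReal (ρ ^ (-α)) *
        ∫⁻ w in Metric.sphere (0:Euc n) 1, ENNReal.ofReal (‖x' - w‖ ^ (-α)) ∂μH[d] := by
    rw [← lintegral_const_mul' _ _ ENNReal.ofReal_ne_top]
    refine lintegral_congr fun w => ?_
    rw [hnormeq w, Real.mul_rpow hρ.le (norm_nonneg _),
      ENNReal.ofReal_mul (Real.rpow_nonneg hρ.le _)]
  -- conclude
  have hmain : (∫⁻ y in Metric.sphere z ρ, ENNReal.ofReal (‖x - y‖ ^ (-α)) ∂μH[d])
      = (c : ℝ≥0∞)⁻¹ * (ENNReal.ofReal (ρ ^ (-α)) *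
          ∫⁻ w in Metric.sphere (0:Euc n) 1, ENNReal.ofReal (‖x' - w‖ ^ (-α)) ∂μH[d]) := by
    rw [← hTint, ← key, ← mul_assoc, ENNReal.inv_mul_cancel hcne0 hcnetop, one_mul]
  rw [hmain]
  have hcoef : (c : ℝ≥0∞)⁻¹ * ENNReal.ofReal (ρ ^ (-α)) = ENNReal.ofReal (ρ ^ (2 * lam)) := by
    rw [hcE, ← ENNReal.rpow_neg, neg_neg, ← ENNReal.ofReal_rpow_of_pos hρ,
      ← ENNReal.rpow_add _ _ hoρ0 hoρtop, ENNReal.ofReal_rpow_of_pos hρ]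
    congr 1
    rw [hα, hd]; ring
  calc (c : ℝ≥0∞)⁻¹ * (ENNReal.ofReal (ρ ^ (-α)) *
          ∫⁻ w in Metric.sphere (0:Euc n) 1, ENNReal.ofReal (‖x' - w‖ ^ (-α)) ∂μH[d])
      = ENNReal.ofReal (ρ ^ (2 * lam)) *
          ∫⁻ w in Metric.sphere (0:Euc n) 1, ENNReal.ofReal (‖x' - w‖ ^ (-α)) ∂μH[d] := by
        rw [← mul_assoc, hcoef]
    _ ≤ ENNReal.ofReal (ρ ^ (2 * lam)) * ENNReal.ofReal (B.toReal + 1) := by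
        gcongr
        refine (hint x').trans ?_
        conv_lhs => rw [← ENNReal.ofReal_toReal hBne]
        exact ENNReal.ofReal_le_ofReal (by linarith)
    _ = ENNReal.ofReal ((B.toReal + 1) * ρ ^ (2 * lam)) := by
        rw [← ENNReal.ofReal_mul (Real.rpow_nonneg hρ.le _), mul_comm]
end
end

section
/- Let X and Y be Banach spaces (over ℝ or ℂ), let D ⊆ Y be a dense linear subspace, let j ≥ 1, and let Q : D × ⋯ × D → X (j factors) be a j-multilinear map. Define T : D → X by T(f) := Q(f,…,f), and assume there is a constant C ≥ 0 such that ‖T(f)‖_X ≤ C ‖f‖_Y^j for every f ∈ D. Then there exists a unique continuous map T̃ : Y → X with T̃(f) = T(f) for all f ∈ D, and it satisfies ‖T̃(f)‖_X ≤ C ‖f‖_Y^j for every f ∈ Y. -/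
noncomputable section

open Finset Filter Topology

private lemma neg_one_pow_sub' (n k : ℕ) (h : k ≤ n) : (-1:ℤ)^(n-k) = (-1)^n * (-1)^k := by
  conv_rhs => rw [← Nat.sub_add_cancel h]
  rw [pow_add, mul_assoc, ← mul_pow]
  norm_num

/-- Inclusion–exclusion coefficient. -/
private lemma coeff_lemma {j : ℕ} (s : Finset (Fin j)) :
    (∑ A ∈ (Finset.univ : Finset (Fin j)).powerset.filter (fun A => s ⊆ A),
      (-1:ℤ) ^ (j - A.card)) = if s = Finset.univ then 1 else 0 := by
  classical
  have hbij : ∑ A ∈ (Finset.univ : Finset (Fin j)).powerset.filter (fun A => s ⊆ A),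
      (-1:ℤ) ^ (j - A.card)
      = ∑ B ∈ sᶜ.powerset, (-1:ℤ) ^ (j - (s ∪ B).card) := by
    refine (Finset.sum_nbij' (i := fun B => s ∪ B) (j := fun A => A \ s) ?_ ?_ ?_ ?_ ?_).symm
    · intro B hB
      simp only [Finset.mem_powerset] at hB
      simp only [Finset.mem_filter, Finset.mem_powerset]
      exact ⟨Finset.subset_univ _, Finset.subset_union_left⟩
    · intro A hA
      simp only [Finset.mem_filter, Finset.mem_powerset] at hA
      simp only [Finset.mem_powerset]
      intro x hx
      simp only [Finset.mem_sdiff] at hx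
      simp [Finset.mem_compl, hx.2]
    · intro B hB
      simp only [Finset.mem_powerset] at hB
      show (s ∪ B) \ s = B
      rw [Finset.union_sdiff_cancel_left]
      rw [Finset.disjoint_left]
      intro a ha hb
      have := hB hb
      simp only [Finset.mem_compl] at this
      exact this ha
    · intro A hA
      simp only [Finset.mem_filter, Finset.mem_powerset] at hA
      show s ∪ A \ s = A
      rw [Finset.union_sdiff_of_subset hA.2]
    · intro B hB
      rfl
  rw [hbij]
  have hcard : ∀ B ∈ sᶜ.powerset, (s ∪ B).card = s.card + B.card := by
    intro B hB
    simp only [Finset.mem_powerset] at hB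
    rw [Finset.card_union_of_disjoint]
    rw [Finset.disjoint_left]
    intro a ha hb
    have := hB hb
    simp only [Finset.mem_compl] at this
    exact this ha
  have hn : ∀ B ∈ sᶜ.powerset, j - (s ∪ B).card = sᶜ.card - B.card := by
    intro B hB
    rw [hcard B hB, Finset.card_compl, Fintype.card_fin, ← Nat.sub_sub]
  have hsub : ∀ B ∈ sᶜ.powerset,
      (-1:ℤ) ^ (j - (s ∪ B).card) = (-1)^sᶜ.card * (-1)^B.card := by
    intro B hB
    rw [hn B hB]
    refine neg_one_pow_sub' _ _ ?_
    simp only [Finset.mem_powerset] at hB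
    exact Finset.card_le_card hB
  rw [Finset.sum_congr rfl hsub, ← Finset.mul_sum, Finset.sum_powerset_neg_one_pow_card]
  by_cases h : s = Finset.univ
  · have : sᶜ = ∅ := by simp [h]
    simp [h, this]
  · have : sᶜ ≠ ∅ := by
      simp only [ne_eq, Finset.compl_eq_empty_iff]
      exact h
    simp [this, h]

/-- Polarization identity for a multilinear map with all factors equal. -/
private lemma polarization' {R M N : Type*} [CommRing R] [AddCommGroup M] [Module R M]
    [AddCommGroup N] [Module R N] {j : ℕ}
    (Q : MultilinearMap R (fun _ : Fin j => M) N) (x : Fin j → M) :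
    ∑ A ∈ (Finset.univ : Finset (Fin j)).powerset,
      (-1 : ℤ) ^ (j - A.card) • Q (fun _ => ∑ i ∈ A, x i)
      = ∑ σ : Equiv.Perm (Fin j), Q (fun k => x (σ k)) := by
  classical
  have step1 : ∀ A : Finset (Fin j), Q (fun _ => ∑ i ∈ A, x i)
      = ∑ r ∈ Fintype.piFinset (fun _ : Fin j => A), Q (fun k => x (r k)) :=
    fun A => Q.map_sum_finset (fun _ i => x i) (fun _ => A)
  calc
    ∑ A ∈ (Finset.univ : Finset (Fin j)).powerset,
        (-1 : ℤ) ^ (j - A.card) • Q (fun _ => ∑ i ∈ A, x i)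
      = ∑ A ∈ (Finset.univ : Finset (Fin j)).powerset, ∑ r : Fin j → Fin j,
          (if r ∈ Fintype.piFinset (fun _ : Fin j => A)
            then (-1 : ℤ) ^ (j - A.card) • Q (fun k => x (r k)) else 0) := by
        refine Finset.sum_congr rfl fun A _ => ?_
        rw [step1, Finset.smul_sum, Finset.sum_ite_mem, Finset.univ_inter]
    _ = ∑ r : Fin j → Fin j, ∑ A ∈ (Finset.univ : Finset (Fin j)).powerset,
          (if Finset.image r Finset.univ ⊆ A
            then (-1 : ℤ) ^ (j - A.card) • Q (fun k => x (r k)) else 0) := by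
        rw [Finset.sum_comm]
        refine Finset.sum_congr rfl fun r _ => Finset.sum_congr rfl fun A _ => ?_
        congr 1
        simp [Fintype.mem_piFinset, Finset.image_subset_iff]
    _ = ∑ r : Fin j → Fin j,
          (∑ A ∈ (Finset.univ : Finset (Fin j)).powerset.filter
            (fun A => Finset.image r Finset.univ ⊆ A), (-1 : ℤ) ^ (j - A.card))
            • Q (fun k => x (r k)) := by
        refine Finset.sum_congr rfl fun r _ => ?_
        rw [Finset.sum_filter, Finset.sum_smul]
        refine Finset.sum_congr rfl fun A _ => ?_
        split <;> simp
    _ = ∑ r ∈ Finset.univ.filter (fun r : Fin j → Fin j =>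
          Finset.image r Finset.univ = Finset.univ), Q (fun k => x (r k)) := by
        rw [Finset.sum_filter]
        refine Finset.sum_congr rfl fun r _ => ?_
        rw [coeff_lemma]
        split <;> simp
    _ = ∑ σ : Equiv.Perm (Fin j), Q (fun k => x (σ k)) := by
        refine (Finset.sum_bij (fun (σ : Equiv.Perm (Fin j)) _ => (σ : Fin j → Fin j))
          ?_ ?_ ?_ ?_).symm
        · intro σ _
          simp only [Finset.mem_filter, Finset.mem_univ, true_and]
          refine Finset.eq_univ_of_forall fun y => ?_
          exact Finset.mem_image.2 ⟨σ.symm y, Finset.mem_univ _, by simp⟩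
        · intro σ₁ _ σ₂ _ h
          exact Equiv.coe_fn_injective h
        · intro r hr
          simp only [Finset.mem_filter, Finset.mem_univ, true_and] at hr
          have hsurj : Function.Surjective r := fun y => by
            have : y ∈ Finset.image r Finset.univ := by rw [hr]; exact Finset.mem_univ y
            rcases Finset.mem_image.1 this with ⟨a, _, ha⟩
            exact ⟨a, ha⟩
          have hbij : Function.Bijective r := Finite.surjective_iff_bijective.1 hsurj
          exact ⟨Equiv.ofBijective r hbij, Finset.mem_univ _, rfl⟩
        · intro σ _
          rfl

/-- a `j`-multilinear map `Q` on a dense subspace `D` of a Banach space `Y`,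
whose restriction to the diagonal `T(f) = Q(f,…,f)` satisfies `‖T(f)‖ ≤ C‖f‖^j`, gives rise
to a unique continuous extension `T̃ : Y → X` of `T`, which satisfies the same bound. -/
theorem stmt12 (𝕜 : Type*) [RCLike 𝕜] (X Y : Type*)
    [NormedAddCommGroup X] [NormedSpace 𝕜 X] [CompleteSpace X]
    [NormedAddCommGroup Y] [NormedSpace 𝕜 Y] [CompleteSpace Y]
    (D : Subspace 𝕜 Y) (hD : Dense (D : Set Y))
    (j : ℕ) (hj : 1 ≤ j)
    (Q : MultilinearMap 𝕜 (fun _ : Fin j => D) X)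
    (C : ℝ) (hC : 0 ≤ C)
    (hT : ∀ f : D, ‖Q (fun _ => f)‖ ≤ C * ‖(f : Y)‖ ^ j) :
    ∃ T' : Y → X, Continuous T' ∧ (∀ f : D, T' f = Q fun _ => f) ∧
      (∀ f : Y, ‖T' f‖ ≤ C * ‖f‖ ^ j) ∧
      ∀ T'' : Y → X, Continuous T'' → (∀ f : D, T'' f = Q fun _ => f) → T'' = T' := by
  classical
  haveI : Nonempty (Fin j) := ⟨⟨0, hj⟩⟩
  have hjne : (j.factorial : 𝕜) ≠ 0 := Nat.cast_ne_zero.2 j.factorial_ne_zero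
  -- the symmetrization of Q
  set S : MultilinearMap 𝕜 (fun _ : Fin j => D) X :=
    ((j.factorial : 𝕜)⁻¹) • ∑ σ : Equiv.Perm (Fin j), Q.domDomCongr σ with hS
  have hcoe : ∀ f : D, ‖f‖ = ‖(f : Y)‖ := fun f => rfl
  -- S agrees with Q on the diagonal
  have hSdiag : ∀ f : D, S (fun _ => f) = Q (fun _ => f) := by
    intro f
    rw [hS, MultilinearMap.smul_apply, MultilinearMap.sum_apply]
    have h1 : ∀ σ : Equiv.Perm (Fin j), (Q.domDomCongr σ) (fun _ => f) = Q (fun _ => f) :=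
      fun σ => rfl
    rw [Finset.sum_congr rfl (fun σ _ => h1 σ), Finset.sum_const, Finset.card_univ,
      Fintype.card_perm, Fintype.card_fin, ← Nat.cast_smul_eq_nsmul 𝕜, smul_smul, inv_mul_cancel₀ hjne, one_smul]
  -- first bound on S from polarization
  have hSb1 : ∀ x : Fin j → D, ‖S x‖ ≤ C * 2 ^ j * (∑ i, ‖(x i : Y)‖) ^ j := by
    intro x
    have h1 : S x = (j.factorial : 𝕜)⁻¹ • ∑ σ : Equiv.Perm (Fin j), Q (fun k => x (σ k)) := by
      rw [hS, MultilinearMap.smul_apply, MultilinearMap.sum_apply]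
      rfl
    rw [h1, ← polarization' Q x, norm_smul]
    have hninv : ‖(j.factorial : 𝕜)⁻¹‖ ≤ 1 := by
      rw [norm_inv, RCLike.norm_natCast]
      rw [inv_le_one_iff₀]
      right
      exact_mod_cast Nat.one_le_cast.2 j.factorial_pos
    have hterm : ∀ A ∈ (Finset.univ : Finset (Fin j)).powerset,
        ‖(-1:ℤ) ^ (j - A.card) • Q (fun _ => ∑ i ∈ A, x i)‖
          ≤ C * (∑ i, ‖(x i : Y)‖) ^ j := by
      intro A _
      have hsgn : ‖(-1:ℤ) ^ (j - A.card) • Q (fun _ => ∑ i ∈ A, x i)‖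
          = ‖Q (fun _ => ∑ i ∈ A, x i)‖ := by
        rcases Nat.even_or_odd (j - A.card) with he | ho
        · rw [he.neg_one_pow, one_zsmul]
        · rw [ho.neg_one_pow, neg_zsmul, one_zsmul, norm_neg]
      rw [hsgn]
      refine (hT _).trans ?_
      have hsumnorm : ‖((∑ i ∈ A, x i : D) : Y)‖ ≤ ∑ i, ‖(x i : Y)‖ := by
        calc ‖((∑ i ∈ A, x i : D) : Y)‖ = ‖∑ i ∈ A, (x i : Y)‖ := by push_cast; rfl
          _ ≤ ∑ i ∈ A, ‖(x i : Y)‖ := norm_sum_le _ _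
          _ ≤ ∑ i, ‖(x i : Y)‖ :=
            Finset.sum_le_sum_of_subset_of_nonneg (Finset.subset_univ _)
              (fun i _ _ => norm_nonneg _)
      gcongr
    calc ‖(j.factorial : 𝕜)⁻¹‖ * ‖∑ A ∈ (Finset.univ : Finset (Fin j)).powerset,
          (-1:ℤ) ^ (j - A.card) • Q (fun _ => ∑ i ∈ A, x i)‖
        ≤ 1 * ‖∑ A ∈ (Finset.univ : Finset (Fin j)).powerset,
          (-1:ℤ) ^ (j - A.card) • Q (fun _ => ∑ i ∈ A, x i)‖ := by
          gcongr
      _ = ‖∑ A ∈ (Finset.univ : Finset (Fin j)).powerset,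
          (-1:ℤ) ^ (j - A.card) • Q (fun _ => ∑ i ∈ A, x i)‖ := one_mul _
      _ ≤ ∑ A ∈ (Finset.univ : Finset (Fin j)).powerset, ‖(-1:ℤ) ^ (j - A.card) •
          Q (fun _ => ∑ i ∈ A, x i)‖ := norm_sum_le _ _
      _ ≤ ∑ _A ∈ (Finset.univ : Finset (Fin j)).powerset, C * (∑ i, ‖(x i : Y)‖) ^ j :=
          Finset.sum_le_sum hterm
      _ = C * 2 ^ j * (∑ i, ‖(x i : Y)‖) ^ j := by
          rw [Finset.sum_const, Finset.card_powerset, Finset.card_univ, Fintype.card_fin,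
            nsmul_eq_mul]
          push_cast
          ring
  -- final multiplicative bound
  set K : ℝ := C * 2 ^ j * (j : ℝ) ^ j with hK
  have hK0 : 0 ≤ K := by positivity
  have hSbound : ∀ x : Fin j → D, ‖S x‖ ≤ K * ∏ i, ‖x i‖ := by
    intro x
    by_cases hx : ∃ i, x i = 0
    · obtain ⟨i, hi⟩ := hx
      rw [S.map_coord_zero i hi, norm_zero]
      have : (∏ i, ‖x i‖) = 0 :=
        Finset.prod_eq_zero (Finset.mem_univ i) (by rw [hi, norm_zero])
      rw [this, mul_zero]
    · push_neg at hx
      have hxn : ∀ i, ‖(x i : Y)‖ ≠ 0 := fun i =>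
        norm_ne_zero_iff.2 (fun h => hx i (Subtype.coe_injective (by simpa using h)))
      set y : Fin j → D := fun i => ((‖(x i : Y)‖ : 𝕜))⁻¹ • x i with hy
      have hyn : ∀ i, ‖(y i : Y)‖ = 1 := by
        intro i
        rw [hy]
        simp only [Submodule.coe_smul]
        rw [norm_smul, norm_inv, RCLike.norm_ofReal, abs_of_nonneg (norm_nonneg _),
          inv_mul_cancel₀ (hxn i)]
      have hxy : x = fun i => ((‖(x i : Y)‖ : 𝕜)) • y i := by
        funext i
        rw [hy]
        rw [smul_smul, mul_inv_cancel₀ (by exact_mod_cast RCLike.ofReal_ne_zero.2 (hxn i)),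
          one_smul]
      have hSy : ‖S y‖ ≤ C * 2 ^ j * (j : ℝ) ^ j := by
        refine (hSb1 y).trans ?_
        have : (∑ i, ‖(y i : Y)‖) = (j : ℝ) := by
          rw [Finset.sum_congr rfl (fun i _ => hyn i)]
          simp
        rw [this]
      calc ‖S x‖ = ‖S (fun i => ((‖(x i : Y)‖ : 𝕜)) • y i)‖ := by rw [← hxy]
        _ = ‖(∏ i, ((‖(x i : Y)‖ : 𝕜))) • S y‖ := by rw [MultilinearMap.map_smul_univ]
        _ = (∏ i, ‖(x i : Y)‖) * ‖S y‖ := by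
            rw [norm_smul, norm_prod]
            congr 1
            exact Finset.prod_congr rfl fun i _ => by
              rw [RCLike.norm_ofReal, abs_of_nonneg (norm_nonneg _)]
        _ ≤ (∏ i, ‖(x i : Y)‖) * (C * 2 ^ j * (j : ℝ) ^ j) := by
            gcongr
        _ = K * ∏ i, ‖x i‖ := mul_comm _ _
  -- the diagonal map on D
  set g : D → X := fun f => Q (fun _ => f) with hg
  have hgS : ∀ f : D, g f = S (fun _ => f) := fun f => (hSdiag f).symm
  have hgc : Continuous g := by
    have : Continuous fun f : D => S (fun _ : Fin j => f) :=
      (S.continuous_of_bound K hSbound).comp (continuous_pi fun _ => continuous_id)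
    simpa [funext hgS] using this
  -- Lipschitz estimate on balls
  have hlip : ∀ a b : D, ‖g a - g b‖ ≤ K * j * max ‖a‖ ‖b‖ ^ (j - 1) * ‖a - b‖ := by
    intro a b
    have h := S.norm_image_sub_le_of_bound hK0 hSbound (fun _ => a) (fun _ => b)
    rw [← hgS, ← hgS] at h
    have h1 : ‖(fun _ : Fin j => a)‖ = ‖a‖ := pi_norm_const a
    have h2 : ‖(fun _ : Fin j => b)‖ = ‖b‖ := pi_norm_const b
    have h3 : ‖(fun _ : Fin j => a) - (fun _ : Fin j => b)‖ = ‖a - b‖ := by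
      rw [show ((fun _ : Fin j => a) - fun _ : Fin j => b) = (fun _ : Fin j => a - b) from rfl]
      exact pi_norm_const (a - b)
    rw [h1, h2, h3, Fintype.card_fin] at h
    exact h
  -- dense inducing inclusion
  have di : IsDenseInducing ((↑) : D → Y) := ⟨Topology.IsInducing.subtypeVal, hD.denseRange_val⟩
  -- existence of limits
  have hlim : ∀ y : Y, ∃ c : X, Filter.Tendsto g (Filter.comap ((↑) : D → Y) (𝓝 y)) (𝓝 c) := by
    intro y
    set l := Filter.comap ((↑) : D → Y) (𝓝 y) with hl
    haveI : l.NeBot := di.comap_nhds_neBot y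
    have hcl : Cauchy l := by
      refine Cauchy.comap cauchy_nhds (le_of_eq ?_)
      rw [uniformity_subtype]
    set Kj : ℝ := K * j * (‖y‖ + 1) ^ (j - 1) with hKj
    have hKj0 : 0 ≤ Kj := by positivity
    set L : ℝ := Kj + 1 with hL
    have hL0 : 0 < L := by positivity
    have hmap : Cauchy (Filter.map g l) := by
      rcases Metric.cauchy_iff.1 hcl with ⟨hne, hsmall⟩
      refine Metric.cauchy_iff.2 ⟨hne.map g, fun ε hε => ?_⟩
      obtain ⟨s, hs, hsd⟩ := hsmall (ε / L) (div_pos hε hL0)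
      have hB : ((Subtype.val) ⁻¹' Metric.ball y 1 : Set D) ∈ l :=
        Filter.preimage_mem_comap (Metric.ball_mem_nhds y one_pos)
      refine ⟨g '' (s ∩ ((Subtype.val) ⁻¹' Metric.ball y 1)),
        Filter.image_mem_map (Filter.inter_mem hs hB), ?_⟩
      rintro _ ⟨a, ⟨has, haB⟩, rfl⟩ _ ⟨b, ⟨hbs, hbB⟩, rfl⟩
      have hnorm : ∀ c : D, (c : Y) ∈ Metric.ball y 1 → ‖c‖ ≤ ‖y‖ + 1 := by
        intro c hc
        have : dist (c : Y) y < 1 := Metric.mem_ball.1 hc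
        rw [hcoe]
        have h1 : ‖(c : Y)‖ - ‖y‖ ≤ dist (c : Y) y := by
          rw [dist_eq_norm]; exact norm_sub_norm_le _ _
        linarith
      have hmax : max ‖a‖ ‖b‖ ≤ ‖y‖ + 1 := max_le (hnorm a haB) (hnorm b hbB)
      have hab : ‖a - b‖ < ε / L := by
        rw [← dist_eq_norm]
        exact hsd a has b hbs
      calc dist (g a) (g b) = ‖g a - g b‖ := dist_eq_norm _ _
        _ ≤ K * j * max ‖a‖ ‖b‖ ^ (j - 1) * ‖a - b‖ := hlip a b
        _ ≤ Kj * ‖a - b‖ := by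
            rw [hKj]
            gcongr
        _ ≤ Kj * (ε / L) := by
            gcongr
        _ < L * (ε / L) := by
            refine mul_lt_mul_of_pos_right ?_ (div_pos hε hL0)
            rw [hL]; linarith
        _ = ε := by
            rw [mul_comm, div_mul_cancel₀ _ hL0.ne']
    obtain ⟨c, hc⟩ := CompleteSpace.complete hmap
    exact ⟨c, hc⟩
  -- the extension
  set T' : Y → X := di.extend g with hT'
  have hcont : Continuous T' := di.continuous_extend hlim
  have hagree : ∀ f : D, T' f = Q (fun _ => f) := fun f => di.extend_eq hgc f
  refine ⟨T', hcont, hagree, ?_, ?_⟩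
  · -- the bound extends by continuity
    have hclosed : IsClosed {y : Y | ‖T' y‖ ≤ C * ‖y‖ ^ j} :=
      isClosed_le (hcont.norm) (continuous_const.mul (continuous_norm.pow j))
    have hsubset : (D : Set Y) ⊆ {y : Y | ‖T' y‖ ≤ C * ‖y‖ ^ j} := by
      rintro y hy
      have : T' y = Q (fun _ => (⟨y, hy⟩ : D)) := hagree ⟨y, hy⟩
      simp only [Set.mem_setOf_eq, this]
      exact hT ⟨y, hy⟩
    intro f
    have hf : f ∈ closure (D : Set Y) := by rw [hD.closure_eq]; trivial
    exact hclosed.closure_subset_iff.2 hsubset hf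
  · -- uniqueness
    intro T'' hT''c hT''eq
    refine Continuous.ext_on hD hT''c hcont ?_
    rintro y hy
    rw [show y = ((⟨y, hy⟩ : D) : Y) from rfl, hT''eq ⟨y, hy⟩, hagree ⟨y, hy⟩]
end
end

section
/- Let n ≥ 1, γ ∈ ℝ, c > 0 and C > 0. Let u : ℝⁿ → [0,∞] be a measurable function with u(η) ≥ C ⟨η⟩^{−n/2−γ} for almost every η with |η| > c, and let ψ : ℝⁿ → [0,∞) be a continuous non-negative function with ψ(0) > 0. Then there is a constant C' > 0 such that the convolution satisfies (ψ * u)(η) ≥ C' ⟨η⟩^{−n/2−γ} for every η with |η| ≥ 2c; consequently, for every α ≥ γ, ∫_{ℝⁿ} ⟨η⟩^{2α} ((ψ * u)(η))² dη = ∞, i.e. ⟨·⟩^α (ψ*u) ∉ L²(ℝⁿ). (This is the mechanism showing that a tempered distribution whose non-negative Fourier transform dominates ⟨η⟩^{−n/2−γ} at infinity does not belong to W^{α,2}_{loc}(ℝⁿ) for α ≥ γ.) -/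
open MeasureTheory
open scoped ENNReal

noncomputable section

/-- The Japanese bracket `⟨x⟩ = (1+|x|²)^{1/2}`. -/
def jap {n : ℕ} (x : Euc n) : ℝ := Real.sqrt (1 + ‖x‖ ^ 2)

lemma jap_one_le {n : ℕ} (x : Euc n) : 1 ≤ jap x := by
  have h := Real.sqrt_le_sqrt (show (1:ℝ) ≤ 1 + ‖x‖ ^ 2 by nlinarith [sq_nonneg ‖x‖])
  simpa [jap] using h

lemma jap_pos {n : ℕ} (x : Euc n) : 0 < jap x := lt_of_lt_of_le one_pos (jap_one_le x)

lemma jap_le_one_add {n : ℕ} (x : Euc n) : jap x ≤ 1 + ‖x‖ := sqrt_one_add_norm_sq_le x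

lemma jap_add_le {n : ℕ} (a b : Euc n) : jap (a + b) ≤ Real.sqrt 2 * (jap a * jap b) := by
  have h1 : 1 + ‖a + b‖ ^ 2 ≤ 2 * ((1 + ‖a‖ ^ 2) * (1 + ‖b‖ ^ 2)) := by
    have hab : ‖a + b‖ ≤ ‖a‖ + ‖b‖ := norm_add_le a b
    have h0a : 0 ≤ ‖a‖ := norm_nonneg a
    have h0b : 0 ≤ ‖b‖ := norm_nonneg b
    have h0ab : 0 ≤ ‖a + b‖ := norm_nonneg _
    nlinarith [sq_nonneg (‖a‖ - ‖b‖), sq_nonneg (‖a‖ * ‖b‖)]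
  calc jap (a + b) ≤ Real.sqrt (2 * ((1 + ‖a‖ ^ 2) * (1 + ‖b‖ ^ 2))) := Real.sqrt_le_sqrt h1
    _ = Real.sqrt 2 * (jap a * jap b) := by
        rw [Real.sqrt_mul (by norm_num), Real.sqrt_mul (by positivity)]; rfl

lemma jap_shift {n : ℕ} {r t : ℝ} (hr : 0 ≤ r) (η ξ : Euc n) (hξ : ‖ξ‖ ≤ r) :
    (Real.sqrt 2 * (1 + r)) ^ (-|t|) * jap η ^ t ≤ jap (η - ξ) ^ t := by
  set M : ℝ := Real.sqrt 2 * (1 + r) with hM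
  have hM1 : 1 ≤ M := by
    have : (1:ℝ) ≤ Real.sqrt 2 := by
      rw [show (1:ℝ) = Real.sqrt 1 by simp]; exact Real.sqrt_le_sqrt (by norm_num)
    nlinarith
  have hM0 : 0 < M := lt_of_lt_of_le one_pos hM1
  have hjξ : jap ξ ≤ 1 + r := (jap_le_one_add ξ).trans (by linarith)
  have hub : jap (η - ξ) ≤ M * jap η := by
    calc jap (η - ξ) = jap (η + (-ξ)) := by rw [sub_eq_add_neg]
      _ ≤ Real.sqrt 2 * (jap η * jap (-ξ)) := jap_add_le η (-ξ)
      _ = Real.sqrt 2 * (jap η * jap ξ) := by simp [jap]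
      _ ≤ Real.sqrt 2 * (jap η * (1 + r)) := by
          gcongr <;> first | exact hjξ | exact (jap_pos _).le | exact Real.sqrt_nonneg 2
      _ = M * jap η := by rw [hM]; ring
  have hlb : jap η / M ≤ jap (η - ξ) := by
    rw [div_le_iff₀ hM0]
    calc jap η = jap ((η - ξ) + ξ) := by rw [sub_add_cancel]
      _ ≤ Real.sqrt 2 * (jap (η - ξ) * jap ξ) := jap_add_le _ _
      _ ≤ Real.sqrt 2 * (jap (η - ξ) * (1 + r)) := by
          gcongr <;> first | exact hjξ | exact (jap_pos _).le | exact Real.sqrt_nonneg 2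
      _ = jap (η - ξ) * M := by rw [hM]; ring
  rcases le_or_gt 0 t with ht | ht
  · rw [abs_of_nonneg ht]
    have : M ^ (-t) * jap η ^ t = (jap η / M) ^ t := by
      rw [Real.div_rpow (jap_pos η).le hM0.le, Real.rpow_neg hM0.le]
      ring
    rw [this]
    exact Real.rpow_le_rpow (div_nonneg (jap_pos η).le hM0.le) hlb ht
  · rw [abs_of_neg ht, neg_neg]
    have : M ^ t * jap η ^ t = (M * jap η) ^ t := (Real.mul_rpow hM0.le (jap_pos η).le).symm
    rw [this]
    exact Real.rpow_le_rpow_of_nonpos (jap_pos _) hub ht.le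

lemma shells_top {n : ℕ} (hn : 1 ≤ n) {R δ : ℝ} (hR : 0 < R) (hδ : 0 < δ)
    (f : Euc n → ℝ≥0∞)
    (hf : ∀ η : Euc n, R ≤ ‖η‖ → ENNReal.ofReal (δ * (1 + ‖η‖) ^ (-(n : ℝ))) ≤ f η) :
    ∫⁻ η : Euc n, f η = ⊤ := by
  haveI : Nontrivial (Euc n) :=
    Module.nontrivial_of_finrank_pos (R := ℝ)
      (by rw [finrank_euclideanSpace_fin]; omega)
  set S : ℕ → Set (Euc n) := fun k =>
    Metric.ball (0 : Euc n) (R * 2 ^ (k + 1)) \ Metric.ball (0 : Euc n) (R * 2 ^ k) with hS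
  have hmem : ∀ k (η : Euc n), η ∈ S k ↔ ‖η‖ < R * 2 ^ (k + 1) ∧ R * 2 ^ k ≤ ‖η‖ := by
    intro k η
    simp [hS, Metric.mem_ball, dist_zero_right, not_lt]
  have hmeas : ∀ k, MeasurableSet (S k) :=
    fun k => measurableSet_ball.diff measurableSet_ball
  have hd2 : ∀ i j, i < j → Disjoint (S i) (S j) := by
    intro i j hlt
    rw [Set.disjoint_left]
    intro x hxi hxj
    rw [hmem] at hxi hxj
    have h2 : (2:ℝ) ^ (i+1) ≤ 2 ^ j := pow_le_pow_right₀ (by norm_num) (by omega)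
    nlinarith [hxi.1, hxj.2]
  have hdisj : Pairwise (Function.onFun Disjoint S) := by
    intro i j hij
    rcases hij.lt_or_gt with h | h
    · exact hd2 _ _ h
    · exact (hd2 _ _ h).symm
  set V : ℝ≥0∞ := volume (Metric.ball (0 : Euc n) 1) with hV
  have hVtop : V ≠ ⊤ := measure_ball_lt_top.ne
  have hV0 : V ≠ 0 := (Metric.measure_ball_pos _ _ one_pos).ne'
  have hball : ∀ r : ℝ, 0 ≤ r →
      volume (Metric.ball (0 : Euc n) r) = ENNReal.ofReal (r ^ n) * V := by
    intro r hr
    rw [hV, Measure.addHaar_ball _ _ hr, finrank_euclideanSpace_fin]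
  have hvolS : ∀ k, volume (S k) =
      ENNReal.ofReal ((R * 2 ^ (k + 1)) ^ n - (R * 2 ^ k) ^ n) * V := by
    intro k
    have hsub : Metric.ball (0 : Euc n) (R * 2 ^ k) ⊆ Metric.ball (0 : Euc n) (R * 2 ^ (k+1)) :=
      Metric.ball_subset_ball
        (mul_le_mul_of_nonneg_left (pow_le_pow_right₀ (by norm_num) (Nat.le_succ k)) hR.le)
    rw [hS]
    rw [measure_diff hsub measurableSet_ball.nullMeasurableSet measure_ball_lt_top.ne,
      hball _ (by positivity), hball _ (by positivity),
      ← ENNReal.sub_mul (fun _ _ => hVtop), ← ENNReal.ofReal_sub _ (by positivity)]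
  set ε : ℝ≥0∞ := ENNReal.ofReal (δ * (R ^ n * ((2:ℝ) ^ n - 1) / (1 + 2 * R) ^ n)) * V with hε
  have hε0 : ε ≠ 0 := by
    apply mul_ne_zero _ hV0
    have h2 : (1:ℝ) < 2 ^ n := one_lt_pow₀ (by norm_num) (by omega)
    have hp : 0 < δ * (R ^ n * ((2:ℝ) ^ n - 1) / (1 + 2 * R) ^ n) := by
      have : (0:ℝ) < 2 ^ n - 1 := by linarith
      positivity
    exact (ENNReal.ofReal_pos.mpr hp).ne'
  have hkey : ∀ k, ε ≤ ∫⁻ η in S k, f η := by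
    intro k
    have h2k : (1:ℝ) ≤ 2 ^ k := one_le_pow₀ (by norm_num)
    have hg : ∀ η ∈ S k,
        ENNReal.ofReal (δ * ((1 + 2 * R) * 2 ^ k) ^ (-(n : ℝ))) ≤ f η := by
      intro η hη
      rw [hmem] at hη
      have hRη : R ≤ ‖η‖ := le_trans (by nlinarith) hη.2
      refine le_trans ?_ (hf η hRη)
      apply ENNReal.ofReal_le_ofReal
      apply mul_le_mul_of_nonneg_left _ hδ.le
      apply Real.rpow_le_rpow_of_nonpos (by positivity) _ (neg_nonpos.mpr (Nat.cast_nonneg n))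
      have : ‖η‖ < R * 2 ^ (k + 1) := hη.1
      have h2 : R * 2 ^ (k+1) = 2 * R * 2 ^ k := by ring
      nlinarith
    calc ε ≤ ENNReal.ofReal (δ * ((1 + 2 * R) * 2 ^ k) ^ (-(n : ℝ))) * volume (S k) := by
          rw [hvolS k, hε, ← mul_assoc, ← ENNReal.ofReal_mul (by positivity)]
          apply mul_le_mul_left (ENNReal.ofReal_le_ofReal (le_of_eq _))
          rw [Real.rpow_neg (by positivity), Real.rpow_natCast]
          have e1 : (R * 2 ^ (k+1)) ^ n = R ^ n * ((2:ℝ) ^ k) ^ n * 2 ^ n := by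
            rw [pow_succ]; ring
          have e2 : (R * 2 ^ k) ^ n = R ^ n * ((2:ℝ) ^ k) ^ n := by rw [mul_pow]
          have e3 : ((1 + 2 * R) * 2 ^ k) ^ n = (1 + 2 * R) ^ n * ((2:ℝ) ^ k) ^ n := by
            rw [mul_pow]
          rw [e1, e2, e3]
          have ha : ((1:ℝ) + 2 * R) ^ n ≠ 0 := by positivity
          have hb : (((2:ℝ) ^ k) ^ n) ≠ 0 := by positivity
          field_simp
      _ = ∫⁻ _ in S k, ENNReal.ofReal (δ * ((1 + 2 * R) * 2 ^ k) ^ (-(n : ℝ))) := by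
          rw [setLIntegral_const]
      _ ≤ ∫⁻ η in S k, f η := by
          refine lintegral_mono_ae ?_
          filter_upwards [ae_restrict_mem (hmeas k)] with η hη using hg η hη
  have htop : (∫⁻ η in ⋃ k, S k, f η) = ⊤ := by
    rw [lintegral_iUnion hmeas hdisj]
    rw [eq_top_iff]
    calc (⊤ : ℝ≥0∞) = ∑' _ : ℕ, ε := (ENNReal.tsum_const_eq_top_of_ne_zero hε0).symm
      _ ≤ ∑' k, ∫⁻ η in S k, f η := ENNReal.tsum_le_tsum hkey
  rw [eq_top_iff, ← htop]
  exact setLIntegral_le_lintegral _ _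

/-- if a non-negative measurable `u` satisfies `u(η) ≥ C⟨η⟩^{-n/2-γ}` for a.e.
`|η| > c`, and `ψ ≥ 0` is continuous with `ψ(0) > 0`, then `(ψ*u)(η) ≥ C'⟨η⟩^{-n/2-γ}` for
`|η| ≥ 2c`; consequently `⟨·⟩^α (ψ*u) ∉ L²` for every `α ≥ γ`. -/
theorem stmt13 (n : ℕ) (hn : 1 ≤ n) (γ : ℝ) (c C : ℝ) (hc : 0 < c) (hC : 0 < C)
    (u : Euc n → ℝ≥0∞) (hu : Measurable u)
    (hlow : ∀ᵐ η ∂(volume : Measure (Euc n)), c < ‖η‖ →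
      ENNReal.ofReal (C * jap η ^ (-(n : ℝ) / 2 - γ)) ≤ u η)
    (ψ : Euc n → ℝ) (hψc : Continuous ψ) (hψ0 : ∀ ξ, 0 ≤ ψ ξ) (hψpos : 0 < ψ 0) :
    ∃ C' : ℝ, 0 < C' ∧
      (∀ η : Euc n, 2 * c ≤ ‖η‖ →
        ENNReal.ofReal (C' * jap η ^ (-(n : ℝ) / 2 - γ)) ≤
          ∫⁻ ξ : Euc n, ENNReal.ofReal (ψ ξ) * u (η - ξ)) ∧
      ∀ α : ℝ, γ ≤ α →
        (∫⁻ η : Euc n, ENNReal.ofReal (jap η ^ (2 * α)) *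
            (∫⁻ ξ : Euc n, ENNReal.ofReal (ψ ξ) * u (η - ξ)) ^ 2) = ⊤ := by
  set t : ℝ := -(n : ℝ) / 2 - γ with ht
  -- get a ball on which ψ ≥ ψ 0 / 2
  have hev : ∀ᶠ ξ in nhds (0 : Euc n), ψ 0 / 2 < ψ ξ :=
    (hψc.tendsto 0).eventually (eventually_gt_nhds (half_lt_self hψpos))
  obtain ⟨d, hd0, hd⟩ := Metric.eventually_nhds_iff.mp hev
  set r : ℝ := min (d / 2) (c / 2) with hrdef
  have hr0 : 0 < r := lt_min (by linarith) (by linarith)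
  have hrc : r ≤ c / 2 := min_le_right _ _
  have hψr : ∀ ξ : Euc n, ‖ξ‖ ≤ r → ψ 0 / 2 ≤ ψ ξ := by
    intro ξ hξ
    have : dist ξ 0 < d := by
      rw [dist_zero_right]
      have := min_le_left (d / 2) (c / 2)
      linarith [hξ.trans this]
    exact (hd this).le
  set M : ℝ := Real.sqrt 2 * (1 + r) with hMdef
  have hM0 : 0 < M := by positivity
  set K : ℝ := M ^ (-|t|) with hKdef
  have hK0 : 0 < K := Real.rpow_pos_of_pos hM0 _
  set B : Set (Euc n) := Metric.closedBall (0 : Euc n) r with hBdef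
  set V : ℝ≥0∞ := volume B with hVdef
  have hVtop : V ≠ ⊤ := measure_closedBall_lt_top.ne
  have hV0 : V ≠ 0 := (Metric.measure_closedBall_pos _ _ hr0).ne'
  have hVt0 : 0 < V.toReal := ENNReal.toReal_pos hV0 hVtop
  set C' : ℝ := ψ 0 / 2 * (C * K) * V.toReal with hC'def
  have hC'0 : 0 < C' := by positivity
  have hjap_t_nonneg : ∀ x : Euc n, 0 ≤ jap x ^ t := fun x => (Real.rpow_pos_of_pos (jap_pos x) t).le
  have hmain : ∀ η : Euc n, 2 * c ≤ ‖η‖ →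
      ENNReal.ofReal (C' * jap η ^ t) ≤ ∫⁻ ξ : Euc n, ENNReal.ofReal (ψ ξ) * u (η - ξ) := by
    intro η hη
    have hae : ∀ᵐ ξ ∂(volume : Measure (Euc n)), c < ‖η - ξ‖ →
        ENNReal.ofReal (C * jap (η - ξ) ^ t) ≤ u (η - ξ) :=
      (Measure.measurePreserving_sub_left volume η).quasiMeasurePreserving.ae hlow
    have hstep : ENNReal.ofReal (C' * jap η ^ t) =
        ENNReal.ofReal (ψ 0 / 2 * (C * (K * jap η ^ t))) * V := by
      have h1 : C' * jap η ^ t = ψ 0 / 2 * (C * (K * jap η ^ t)) * V.toReal := by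
        rw [hC'def]; ring
      have h2 : 0 ≤ ψ 0 / 2 * (C * (K * jap η ^ t)) :=
        mul_nonneg (by linarith) (mul_nonneg hC.le (mul_nonneg hK0.le (hjap_t_nonneg η)))
      rw [h1, ENNReal.ofReal_mul h2, ENNReal.ofReal_toReal hVtop]
    calc ENNReal.ofReal (C' * jap η ^ t)
        = ∫⁻ _ in B, ENNReal.ofReal (ψ 0 / 2 * (C * (K * jap η ^ t))) := by
          rw [setLIntegral_const, hstep]
      _ ≤ ∫⁻ ξ in B, ENNReal.ofReal (ψ ξ) * u (η - ξ) := by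
          refine lintegral_mono_ae ?_
          filter_upwards [ae_restrict_mem measurableSet_closedBall, ae_restrict_of_ae hae]
            with ξ hξB hξu
          have hξr : ‖ξ‖ ≤ r := by
            simpa [hBdef, Metric.mem_closedBall, dist_zero_right] using hξB
          have hfar : c < ‖η - ξ‖ := by
            have h2 := norm_sub_norm_le η ξ
            linarith
          have hu' := hξu hfar
          have hjap : K * jap η ^ t ≤ jap (η - ξ) ^ t := jap_shift hr0.le η ξ hξr
          calc ENNReal.ofReal (ψ 0 / 2 * (C * (K * jap η ^ t)))
              ≤ ENNReal.ofReal (ψ ξ * (C * jap (η - ξ) ^ t)) := by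
                apply ENNReal.ofReal_le_ofReal
                apply mul_le_mul (hψr ξ hξr) (mul_le_mul_of_nonneg_left hjap hC.le)
                  (mul_nonneg hC.le (mul_nonneg hK0.le (hjap_t_nonneg η))) (hψ0 ξ)
            _ = ENNReal.ofReal (ψ ξ) * ENNReal.ofReal (C * jap (η - ξ) ^ t) :=
                ENNReal.ofReal_mul (hψ0 ξ)
            _ ≤ ENNReal.ofReal (ψ ξ) * u (η - ξ) := mul_le_mul_right hu' _
      _ ≤ ∫⁻ ξ : Euc n, ENNReal.ofReal (ψ ξ) * u (η - ξ) := setLIntegral_le_lintegral _ _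
  refine ⟨C', hC'0, hmain, ?_⟩
  intro α hα
  apply shells_top hn (R := 2 * c) (δ := C' ^ 2) (by linarith) (by positivity)
  intro η hη
  have h1 := hmain η hη
  have hjp := jap_pos η
  have hcomb : jap η ^ (2 * α) * (C' * jap η ^ t) ^ 2 = C' ^ 2 * jap η ^ (2 * α + t * 2) := by
    rw [mul_pow, ← Real.rpow_natCast (jap η ^ t) 2, ← Real.rpow_mul hjp.le,
      Real.rpow_add hjp]
    push_cast
    ring
  have hexp : (1 + ‖η‖) ^ (-(n : ℝ)) ≤ jap η ^ (2 * α + t * 2) := by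
    have e1 : jap η ^ (-(n : ℝ)) ≤ jap η ^ (2 * α + t * 2) := by
      apply Real.rpow_le_rpow_of_exponent_le (jap_one_le η)
      rw [ht]; push_cast; linarith
    have e2 : (1 + ‖η‖) ^ (-(n : ℝ)) ≤ jap η ^ (-(n : ℝ)) :=
      Real.rpow_le_rpow_of_nonpos hjp (jap_le_one_add η) (neg_nonpos.mpr (Nat.cast_nonneg n))
    linarith
  calc ENNReal.ofReal (C' ^ 2 * (1 + ‖η‖) ^ (-(n : ℝ)))
      ≤ ENNReal.ofReal (jap η ^ (2 * α) * (C' * jap η ^ t) ^ 2) := by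
        apply ENNReal.ofReal_le_ofReal
        rw [hcomb]
        exact mul_le_mul_of_nonneg_left hexp (by positivity)
    _ = ENNReal.ofReal (jap η ^ (2 * α)) * ENNReal.ofReal (C' * jap η ^ t) ^ 2 := by
        rw [ENNReal.ofReal_mul (by positivity), ENNReal.ofReal_pow (by positivity)]
    _ ≤ ENNReal.ofReal (jap η ^ (2 * α)) *
          (∫⁻ ξ : Euc n, ENNReal.ofReal (ψ ξ) * u (η - ξ)) ^ 2 := by
        exact mul_le_mul_right (pow_le_pow_left' h1 2) _
end
end
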